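/- (Cubic spline kernel.) Define the cubic spline profile Ŵ : [0,∞) → ℝ by Ŵ(R) = 1 − 6R² + 6R³ for 0 ≤ R < 1/2, Ŵ(R) = 2(1 − R)³ for 1/2 ≤ R < 1, and Ŵ(R) = 0 for R ≥ 1. Then: (i) Ŵ is nonnegative and continuously differentiable on [0,∞); (ii) Ŵ is nonincreasing, i.e. Ŵ'(R) ≤ 0 for all R ≥ 0 (so the associated radial kernel satisfies the decay condition); and (iii) for every h > 0, ∫_ℝ (4/3)·(1/h)·Ŵ(|x|/h) dx = 1, i.e. with normalization factor σ₁ = 4/3 the one-dimensional cubic spline kernel W(x) = (σ₁/h)·Ŵ(|x|/h) satisfies the normalization condition ∫_ℝ W(x) dx = 1. -/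

import Mathlib

open scoped BigOperators RealInnerProductSpace
open Finset MeasureTheory

noncomputable section

/-- `ℝ^d` as Euclidean space. -/
abbrev Ed (d : ℕ) : Type := EuclideanSpace ℝ (Fin d)

/-- Value of the radial smoothing kernel `W(x) = (σ/h^d)·Ŵ(‖x‖/h)`,
with profile `P = Ŵ`. -/
def Wval (d : ℕ) (σ h : ℝ) (P : ℝ → ℝ) (x : Ed d) : ℝ :=
  (σ / h ^ d) * P (‖x‖ / h)

/-- Gradient of the radial smoothing kernel:
`∇W(x) = (σ/h^{d+1})·Ŵ'(‖x‖/h)·x/‖x‖` for `x ≠ 0`. -/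
def gradW (d : ℕ) (σ h : ℝ) (P : ℝ → ℝ) (x : Ed d) : Ed d :=
  ((σ / h ^ (d + 1)) * deriv P (‖x‖ / h) / ‖x‖) • x

/-- Multi-index power `v^α = v_1^{α_1}⋯v_d^{α_d}`. -/
def mpow {d : ℕ} (v : Ed d) (α : Fin d → ℕ) : ℝ := ∏ k, (v k) ^ (α k)

/-- Total degree `|α| = α_1 + ⋯ + α_d` of a multi-index. -/
def deg {d : ℕ} (α : Fin d → ℕ) : ℕ := ∑ k, α k

/-- Partial derivative along the `k`-th coordinate. -/
def pd {d : ℕ} (k : Fin d) (f : Ed d → ℝ) : Ed d → ℝ :=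
  fun x => fderiv ℝ f x (EuclideanSpace.single k 1)

/-- Mixed partial derivative `D^α f`. -/
def Dmix {d : ℕ} (α : Fin d → ℕ) (f : Ed d → ℝ) : Ed d → ℝ :=
  (List.finRange d).foldr (fun k g => (pd k)^[α k] g) f

/-- Laplacian `Δf = ∑_k ∂_k∂_k f`. -/
def lapl {d : ℕ} (f : Ed d → ℝ) : Ed d → ℝ := fun x => ∑ k, pd k (pd k f) x

/-- Variable coefficient elliptic operator `∇·(a∇f) = aΔf + ∇a·∇f`. -/
def ellip {d : ℕ} (a f : Ed d → ℝ) : Ed d → ℝ :=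
  fun x => a x * lapl f x + ∑ k, pd k a x * pd k f x

/-- The closed cube `Ω = [0,l]^d`. -/
def cube (d : ℕ) (l : ℝ) : Set (Ed d) := {x | ∀ k, x k ∈ Set.Icc 0 l}

/-- The `C^n(Ω)` norm: the max over multi-indices `α` with `|α| ≤ n` of
`sup_{x ∈ Ω} |D^α f x|`. -/
def Cnorm {d : ℕ} (n : ℕ) (f : Ed d → ℝ) (Ω : Set (Ed d)) : ℝ :=
  sSup {y : ℝ | ∃ α : Fin d → ℕ, deg α ≤ n ∧ ∃ x ∈ Ω, y = |Dmix α f x|}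

/-- The cubic spline profile. -/
def cubicSpline (R : ℝ) : ℝ :=
  if R < 1 / 2 then 1 - 6 * R ^ 2 + 6 * R ^ 3
  else if R < 1 then 2 * (1 - R) ^ 3
  else 0

/-- derivative of the positive-part cube -/
lemma q_hasDeriv (t : ℝ) : HasDerivAt (fun s : ℝ => max s 0 ^ 3) (3 * max t 0 ^ 2) t := by
  rcases lt_trichotomy t 0 with ht | ht | ht
  · have hmax : max t 0 = 0 := max_eq_right ht.le
    rw [hmax]
    have : (fun s : ℝ => max s 0 ^ 3) =ᶠ[nhds t] fun _ => (0:ℝ) := by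
      filter_upwards [Iio_mem_nhds ht] with s hs
      rw [max_eq_right (le_of_lt hs)]; norm_num
    simpa using (hasDerivAt_const t (0:ℝ)).congr_of_eventuallyEq this
  · subst ht
    rw [hasDerivAt_iff_tendsto_slope]
    have h0 : max (0:ℝ) 0 = 0 := max_self 0
    have key : Filter.Tendsto (slope (fun s : ℝ => max s 0 ^ 3) 0)
        (nhdsWithin 0 {(0:ℝ)}ᶜ) (nhds 0) := by
      refine squeeze_zero_norm (a := fun s : ℝ => s ^ 2) (fun s => ?_) ?_
      ·
        simp only [slope_def_field, h0]
        rcases le_or_gt s 0 with hs | hs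
        · rw [max_eq_right hs]
          simp [div_nonneg]
          positivity
        · rw [max_eq_left hs.le]
          rcases eq_or_ne s 0 with rfl | hne
          · simp
          · rw [zero_pow (by norm_num), sub_zero, sub_zero, pow_succ, mul_div_assoc,
              div_self hne, mul_one, Real.norm_eq_abs, abs_pow, sq_abs]
      · have : Filter.Tendsto (fun s : ℝ => s ^ 2) (nhds 0) (nhds 0) := by
          simpa using (continuous_pow 2).tendsto (0:ℝ)
        exact this.mono_left nhdsWithin_le_nhds
    simpa using key
  · have hmax : max t 0 = t := max_eq_left ht.le
    rw [hmax]
    have : (fun s : ℝ => max s 0 ^ 3) =ᶠ[nhds t] fun s => s ^ 3 := by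
      filter_upwards [Ioi_mem_nhds ht] with s hs
      rw [max_eq_left (le_of_lt hs)]
    simpa using (hasDerivAt_pow 3 t).congr_of_eventuallyEq this

/-- smooth closed form -/
def Fc (t : ℝ) : ℝ := 2 * max (1 - t) 0 ^ 3 - max (1 - 2 * t) 0 ^ 3

lemma Fc_hasDeriv (t : ℝ) :
    HasDerivAt Fc (-6 * max (1 - t) 0 ^ 2 + 6 * max (1 - 2 * t) 0 ^ 2) t := by
  have h1 : HasDerivAt (fun t : ℝ => 1 - t) (-1) t := by
    simpa using (hasDerivAt_id t).const_sub (1:ℝ)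
  have h2 : HasDerivAt (fun t : ℝ => 1 - 2 * t) (-2) t := by
    simpa using ((hasDerivAt_id t).const_mul (2:ℝ)).const_sub (1:ℝ)
  have g1 := (q_hasDeriv (1 - t)).comp t h1
  have g2 := (q_hasDeriv (1 - 2 * t)).comp t h2
  have := (g1.const_mul 2).sub g2
  exact this.congr_deriv (by ring)

lemma cubicSpline_eq : cubicSpline = Fc := by
  funext R
  unfold cubicSpline Fc
  split_ifs with h1 h2
  · rw [max_eq_left (by linarith), max_eq_left (by linarith)]
    ring
  · rw [max_eq_left (by linarith), max_eq_right (by linarith)]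
    ring
  · rw [max_eq_right (by linarith), max_eq_right (by linarith)]
    ring


lemma cubicSpline_cont : Continuous cubicSpline := by
  rw [cubicSpline_eq]
  exact continuous_iff_continuousAt.mpr fun x => (Fc_hasDeriv x).differentiableAt.continuousAt

lemma cubicSpline_contDiff : ContDiff ℝ 1 cubicSpline := by
  rw [cubicSpline_eq, contDiff_one_iff_deriv]
  constructor
  · exact fun x => (Fc_hasDeriv x).differentiableAt
  · have hd : deriv Fc = fun t => -6 * max (1 - t) 0 ^ 2 + 6 * max (1 - 2 * t) 0 ^ 2 :=
      funext fun t => (Fc_hasDeriv t).deriv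
    rw [hd]
    continuity

lemma cubicSpline_zero_of_one_le {R : ℝ} (hR : 1 ≤ R) : cubicSpline R = 0 := by
  unfold cubicSpline
  rw [if_neg (by linarith), if_neg (by linarith)]

/-- Cubic spline kernel: the cubic spline profile is
nonnegative and continuously differentiable on `[0,∞)`, nonincreasing
(decay condition), and with `σ₁ = 4/3` the associated one-dimensional kernel
is normalized: `∫_ℝ (4/3)(1/h)Ŵ(|x|/h) dx = 1`. -/
theorem stmt_14 :
    (∀ R : ℝ, 0 ≤ R → 0 ≤ cubicSpline R) ∧
    ContDiffOn ℝ 1 cubicSpline (Set.Ici 0) ∧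
    (∀ R : ℝ, 0 ≤ R → deriv cubicSpline R ≤ 0) ∧
    (∀ h : ℝ, 0 < h →
      ∫ x : ℝ, (4 / 3) * (1 / h) * cubicSpline (|x| / h) = 1) := by
  refine ⟨?_, cubicSpline_contDiff.contDiffOn, ?_, ?_⟩
  · intro R hR
    rw [cubicSpline_eq]
    unfold Fc
    have h1 : (0:ℝ) ≤ max (1 - R) 0 := le_max_right _ _
    have h2 : (0:ℝ) ≤ max (1 - 2 * R) 0 := le_max_right _ _
    have h3 : max (1 - 2 * R) 0 ≤ max (1 - R) 0 :=
      max_le_max (by linarith) le_rfl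
    nlinarith [pow_le_pow_left₀ h2 h3 3, pow_nonneg h1 3]
  · intro R hR
    rw [cubicSpline_eq, (Fc_hasDeriv R).deriv]
    have h1 : (0:ℝ) ≤ max (1 - R) 0 := le_max_right _ _
    have h2 : (0:ℝ) ≤ max (1 - 2 * R) 0 := le_max_right _ _
    have h3 : max (1 - 2 * R) 0 ≤ max (1 - R) 0 :=
      max_le_max (by linarith) le_rfl
    nlinarith [pow_le_pow_left₀ h2 h3 2, pow_nonneg h1 2]
  · intro h hh
    -- integral computation
    have habs : ∀ x : ℝ, |x| / h = |x / h| := by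
      intro x; rw [abs_div, abs_of_pos hh]
    have I1 : ∫ x in (0:ℝ)..(1/2), cubicSpline x = 11 / 32 := by
      have hc : ∀ x ∈ Set.uIcc (0:ℝ) (1/2), cubicSpline x = 1 - 6 * x ^ 2 + 6 * x ^ 3 := by
        intro x hx
        rw [Set.uIcc_of_le (by norm_num)] at hx
        unfold cubicSpline
        rcases lt_or_eq_of_le hx.2 with h' | h'
        · rw [if_pos h']
        · rw [h']; norm_num
      rw [intervalIntegral.integral_congr hc]
      have key : ∀ x ∈ Set.uIcc (0:ℝ) (1/2),
          HasDerivAt (fun x : ℝ => x - 2 * x ^ 3 + 3/2 * x ^ 4)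
            (1 - 6 * x ^ 2 + 6 * x ^ 3) x := by
        intro x _
        have := ((hasDerivAt_id x).sub ((hasDerivAt_pow 3 x).const_mul 2)).add
          ((hasDerivAt_pow 4 x).const_mul (3/2))
        exact this.congr_deriv (by ring)
      rw [intervalIntegral.integral_eq_sub_of_hasDerivAt
        (fun x hx => key x hx)
        (by apply Continuous.intervalIntegrable; continuity)]
      norm_num
    have I2 : ∫ x in (1/2:ℝ)..1, cubicSpline x = 1 / 32 := by
      have hc : ∀ x ∈ Set.uIcc (1/2:ℝ) 1, cubicSpline x = 2 * (1 - x) ^ 3 := by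
        intro x hx
        rw [Set.uIcc_of_le (by norm_num)] at hx
        unfold cubicSpline
        rw [if_neg (by push_neg; exact hx.1)]
        rcases lt_or_eq_of_le hx.2 with h' | h'
        · rw [if_pos h']
        · rw [h']; norm_num
      rw [intervalIntegral.integral_congr hc]
      have key : ∀ x ∈ Set.uIcc (1/2:ℝ) 1,
          HasDerivAt (fun x : ℝ => -(1 - x) ^ 4 / 2) (2 * (1 - x) ^ 3) x := by
        intro x _
        have h1 : HasDerivAt (fun x : ℝ => 1 - x) (-1) x := by
          simpa using (hasDerivAt_id x).const_sub (1:ℝ)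
        have := (((hasDerivAt_pow 4 (1 - x)).comp x h1).neg).div_const 2
        exact this.congr_deriv (by ring)
      rw [intervalIntegral.integral_eq_sub_of_hasDerivAt
        (fun x hx => key x hx)
        (by apply Continuous.intervalIntegrable; continuity)]
      norm_num
    have hIoi1 : ∫ x in Set.Ioi (1:ℝ), cubicSpline x = 0 :=
      setIntegral_eq_zero_of_forall_eq_zero fun x hx =>
        cubicSpline_zero_of_one_le (le_of_lt hx)
    have hsplit : ∫ x in Set.Ioi (0:ℝ), cubicSpline x = 3 / 8 := by
      rw [← Set.Ioc_union_Ioi_eq_Ioi (by norm_num : (0:ℝ) ≤ 1),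
        setIntegral_union (Set.Ioc_disjoint_Ioi le_rfl) measurableSet_Ioi
          (cubicSpline_cont.integrableOn_Ioc)
          ((integrableOn_congr_fun (g := fun _ => (0:ℝ)) (fun x hx => cubicSpline_zero_of_one_le (le_of_lt hx))
            measurableSet_Ioi).mpr (integrableOn_zero)),
        hIoi1, add_zero, ← intervalIntegral.integral_of_le (by norm_num : (0:ℝ) ≤ 1),
        ← intervalIntegral.integral_add_adjacent_intervals
          (cubicSpline_cont.intervalIntegrable 0 (1/2))
          (cubicSpline_cont.intervalIntegrable (1/2) 1), I1, I2]
      norm_num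
    have hcomp : ∀ x : ℝ, cubicSpline (|x| / h) = (fun u => cubicSpline |u|) (x / h) := by
      intro x; simp only [habs x]
    calc ∫ x : ℝ, (4 / 3) * (1 / h) * cubicSpline (|x| / h)
        = (4 / 3) * (1 / h) * ∫ x : ℝ, (fun u => cubicSpline |u|) (x / h) := by
          rw [← integral_const_mul]
          congr 1; funext x; rw [hcomp x]
      _ = (4 / 3) * (1 / h) * (|h| • ∫ u : ℝ, cubicSpline |u|) := by
          rw [Measure.integral_comp_div (fun u => cubicSpline |u|) h]
      _ = (4 / 3) * (1 / h) * (h * (2 * (3/8))) := by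
          rw [integral_comp_abs, hsplit, abs_of_pos hh, smul_eq_mul]
      _ = 1 := by field_simp; ring
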